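/- Let A, B, C ∈ 𝔰𝔩(4,ℝ) be pairwise-commuting, and let T be a full torsion tensor of (𝔤_{A,B,C}, φ), i.e., a linear map T : ℝ⁷ → ℝ⁷ with ∇_X φ = ι_{T(X)}ψ for all X. Then T(X,Y) = 0 whenever X ∈ 𝔞 and Y ∈ 𝔫, and also whenever X ∈ 𝔫 and Y ∈ 𝔞, where T(X,Y) := ⟨T(X),Y⟩. -/

import Mathlib

open Matrix

noncomputable section

/-- Standard basis vector `e_{i+1}` of `ℝ⁷` (index `0 ↔ e₁`, …, `6 ↔ e₇`). -/
def E (i : Fin 7) : Fin 7 → ℝ := Pi.single i 1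

/-- The standard inner product on `ℝ⁷` for which `e₁, …, e₇` is orthonormal. -/
def inner7 (X Y : Fin 7 → ℝ) : ℝ := ∑ i, X i * Y i

/-- The component of `X ∈ ℝ⁷` in `𝔫 = span{e₃,e₄,e₅,e₆} ≅ ℝ⁴`. -/
def nPart (X : Fin 7 → ℝ) : Fin 4 → ℝ := fun i => X ⟨i.val + 2, by omega⟩

/-- The inclusion `ℝ⁴ ≅ 𝔫 = span{e₃,e₄,e₅,e₆} ⊆ ℝ⁷`. -/
def emb (w : Fin 4 → ℝ) : Fin 7 → ℝ :=
  fun j => if h : 2 ≤ j.val ∧ j.val ≤ 5 then w ⟨j.val - 2, by omega⟩ else 0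

/-- For `X = λ₁e₁ + λ₂e₂ + λ₇e₇ (+ 𝔫-part)`, the matrix `M_X = λ₁B + λ₂C + λ₇A`. -/
def MX (A B C : Matrix (Fin 4) (Fin 4) ℝ) (X : Fin 7 → ℝ) : Matrix (Fin 4) (Fin 4) ℝ :=
  X 0 • B + X 1 • C + X 6 • A

/-- The bilinear antisymmetric bracket on `ℝ⁷` determined by `[𝔞,𝔞] = 0`, `[𝔫,𝔫] = 0`,
`[e₇,v] = Av`, `[e₁,v] = Bv`, `[e₂,v] = Cv` for `v ∈ 𝔫` and `[v,eₖ] = −[eₖ,v]`,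
where `𝔞 = span{e₁,e₂,e₇}` and `𝔫 = span{e₃,e₄,e₅,e₆}`. -/
def bracket (A B C : Matrix (Fin 4) (Fin 4) ℝ) (X Y : Fin 7 → ℝ) : Fin 7 → ℝ :=
  emb ((MX A B C X).mulVec (nPart Y) - (MX A B C Y).mulVec (nPart X))

/-- The symmetric part `S(M) = (M + Mᵀ)/2` of a matrix. -/
def symPart (M : Matrix (Fin 4) (Fin 4) ℝ) : Matrix (Fin 4) (Fin 4) ℝ :=
  (1/2 : ℝ) • (M + Mᵀ)

/-- The antisymmetric part `A(M) = (M − Mᵀ)/2` of a matrix. -/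
def skewPart (M : Matrix (Fin 4) (Fin 4) ℝ) : Matrix (Fin 4) (Fin 4) ℝ :=
  (1/2 : ℝ) • (M - Mᵀ)

/-- `𝔞 = span{e₁,e₂,e₇} ⊆ ℝ⁷`. -/
def aSub : Submodule ℝ (Fin 7 → ℝ) := Submodule.span ℝ {E 0, E 1, E 6}

/-- `𝔫 = span{e₃,e₄,e₅,e₆} ⊆ ℝ⁷`. -/
def nSub : Submodule ℝ (Fin 7 → ℝ) := Submodule.span ℝ {E 2, E 3, E 4, E 5}

/-- `∇` satisfies the Koszul formula
`⟨∇_X Y, Z⟩ = ½(⟨[X,Y],Z⟩ − ⟨[Y,Z],X⟩ + ⟨[Z,X],Y⟩)`. -/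
def IsKoszul (A B C : Matrix (Fin 4) (Fin 4) ℝ)
    (nabla : (Fin 7 → ℝ) → (Fin 7 → ℝ) → (Fin 7 → ℝ)) : Prop :=
  ∀ X Y Z, inner7 (nabla X Y) Z =
    (1/2 : ℝ) * (inner7 (bracket A B C X Y) Z - inner7 (bracket A B C Y Z) X
      + inner7 (bracket A B C Z X) Y)

/-- The wedge `e^{(i+1)(j+1)(k+1)}` of dual basis elements of `(ℝ⁷)*`, as a 3-form. -/
def w3 (i j k : Fin 7) (X Y Z : Fin 7 → ℝ) : ℝ :=
  Matrix.det !![X i, X j, X k; Y i, Y j, Y k; Z i, Z j, Z k]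

/-- The wedge `e^{(i+1)(j+1)(k+1)(l+1)}` of dual basis elements of `(ℝ⁷)*`, as a 4-form. -/
def w4 (i j k l : Fin 7) (X Y Z W : Fin 7 → ℝ) : ℝ :=
  Matrix.det !![X i, X j, X k, X l; Y i, Y j, Y k, Y l; Z i, Z j, Z k, Z l;
    W i, W j, W k, W l]

/-- The `G₂`-structure 3-form `φ = e¹²⁷ + e³⁴⁷ + e⁵⁶⁷ + e¹³⁵ − e¹⁴⁶ − e²³⁶ − e²⁴⁵`. -/
def phi (X Y Z : Fin 7 → ℝ) : ℝ :=
  w3 0 1 6 X Y Z + w3 2 3 6 X Y Z + w3 4 5 6 X Y Z + w3 0 2 4 X Y Z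
    - w3 0 3 5 X Y Z - w3 1 2 5 X Y Z - w3 1 3 4 X Y Z

/-- The dual 4-form `ψ = e³⁴⁵⁶ + e¹²⁵⁶ + e¹²³⁴ − e²⁴⁶⁷ + e²³⁵⁷ + e¹⁴⁵⁷ + e¹³⁶⁷`. -/
def psi (X Y Z W : Fin 7 → ℝ) : ℝ :=
  w4 2 3 4 5 X Y Z W + w4 0 1 4 5 X Y Z W + w4 0 1 2 3 X Y Z W - w4 1 3 5 6 X Y Z W
    + w4 1 2 4 6 X Y Z W + w4 0 3 4 6 X Y Z W + w4 0 2 5 6 X Y Z W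

/-- `T : ℝ⁷ → ℝ⁷` is a full torsion tensor of `(𝔤_{A,B,C}, φ)`: `∇_X φ = ι_{T(X)} ψ`
for all `X`, where `(∇_X φ)(Y,Z,W) = −φ(∇_X Y,Z,W) − φ(Y,∇_X Z,W) − φ(Y,Z,∇_X W)`
and `(ι_V ψ)(Y,Z,W) = ψ(V,Y,Z,W)`. -/
def IsFullTorsion (nabla : (Fin 7 → ℝ) → (Fin 7 → ℝ) → (Fin 7 → ℝ))
    (T : (Fin 7 → ℝ) → (Fin 7 → ℝ)) : Prop :=
  ∀ X Y Z W, -phi (nabla X Y) Z W - phi Y (nabla X Z) W - phi Y Z (nabla X W)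
    = psi (T X) Y Z W

/-- `T(X,Y) := ⟨T(X),Y⟩`. -/
def Tbil (T : (Fin 7 → ℝ) → (Fin 7 → ℝ)) (X Y : Fin 7 → ℝ) : ℝ := inner7 (T X) Y

/-- The divergence of `T`, determined by
`⟨div T, e_j⟩ = −∑ᵢ T(∇_{e_i}e_i, e_j) − ∑ᵢ T(e_i, ∇_{e_i}e_j)`. -/
def divT (nabla : (Fin 7 → ℝ) → (Fin 7 → ℝ) → (Fin 7 → ℝ))
    (T : (Fin 7 → ℝ) → (Fin 7 → ℝ)) : Fin 7 → ℝ :=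
  fun j => -∑ i, Tbil T (nabla (E i) (E i)) (E j) - ∑ i, Tbil T (E i) (nabla (E i) (E j))

end


set_option maxHeartbeats 4000000
set_option maxRecDepth 100000

lemma det4 (M : Matrix (Fin 4) (Fin 4) ℝ) : M.det =
    M 0 0*M 1 1*M 2 2*M 3 3 - M 0 0*M 1 1*M 2 3*M 3 2 - M 0 0*M 1 2*M 2 1*M 3 3 + M 0 0*M 1 2*M 2 3*M 3 1 + M 0 0*M 1 3*M 2 1*M 3 2 - M 0 0*M 1 3*M 2 2*M 3 1 - M 0 1*M 1 0*M 2 2*M 3 3 + M 0 1*M 1 0*M 2 3*M 3 2 + M 0 1*M 1 2*M 2 0*M 3 3 - M 0 1*M 1 2*M 2 3*M 3 0 - M 0 1*M 1 3*M 2 0*M 3 2 + M 0 1*M 1 3*M 2 2*M 3 0 + M 0 2*M 1 0*M 2 1*M 3 3 - M 0 2*M 1 0*M 2 3*M 3 1 - M 0 2*M 1 1*M 2 0*M 3 3 + M 0 2*M 1 1*M 2 3*M 3 0 + M 0 2*M 1 3*M 2 0*M 3 1 - M 0 2*M 1 3*M 2 1*M 3 0 - M 0 3*M 1 0*M 2 1*M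 3 2 + M 0 3*M 1 0*M 2 2*M 3 1 + M 0 3*M 1 1*M 2 0*M 3 2 - M 0 3*M 1 1*M 2 2*M 3 0 - M 0 3*M 1 2*M 2 0*M 3 1 + M 0 3*M 1 2*M 2 1*M 3 0 := by
  rw [Matrix.det_succ_row_zero]
  simp [Fin.sum_univ_succ, Matrix.det_fin_three, Matrix.submatrix_apply, Fin.succAbove]
  have h1 : (Fin.succ 2 : Fin 4) = 3 := rfl
  have h2 : (Fin.castSucc 2 : Fin 4) = 2 := rfl
  ring

lemma inner7_E (v : Fin 7 → ℝ) (j : Fin 7) : inner7 v (E j) = v j := by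
  simp [inner7, E, Pi.single_apply]

lemma emb0 (w : Fin 4 → ℝ) : emb w 0 = 0 := rfl
lemma emb1 (w : Fin 4 → ℝ) : emb w 1 = 0 := rfl
lemma emb6 (w : Fin 4 → ℝ) : emb w 6 = 0 := rfl
lemma emb2 (w : Fin 4 → ℝ) : emb w 2 = w 0 := rfl
lemma emb3 (w : Fin 4 → ℝ) : emb w 3 = w 1 := rfl
lemma emb4 (w : Fin 4 → ℝ) : emb w 4 = w 2 := rfl
lemma emb5 (w : Fin 4 → ℝ) : emb w 5 = w 3 := rfl
lemma nP0 (v : Fin 7 → ℝ) : nPart v 0 = v 2 := rfl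
lemma nP1 (v : Fin 7 → ℝ) : nPart v 1 = v 3 := rfl
lemma nP2 (v : Fin 7 → ℝ) : nPart v 2 = v 4 := rfl
lemma nP3 (v : Fin 7 → ℝ) : nPart v 3 = v 5 := rfl

lemma inner7_emb (w : Fin 4 → ℝ) (v : Fin 7 → ℝ) :
    inner7 (emb w) v = w 0 * v 2 + w 1 * v 3 + w 2 * v 4 + w 3 * v 5 := by
  simp [inner7, Fin.sum_univ_seven, emb0, emb1, emb2, emb3, emb4, emb5, emb6]

lemma mulVec4 (M : Matrix (Fin 4) (Fin 4) ℝ) (w : Fin 4 → ℝ) (i : Fin 4) :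
    M.mulVec w i = M i 0 * w 0 + M i 1 * w 1 + M i 2 * w 2 + M i 3 * w 3 := by
  simp [Matrix.mulVec, dotProduct, Fin.sum_univ_four]

lemma MX_apply (A B C : Matrix (Fin 4) (Fin 4) ℝ) (X : Fin 7 → ℝ) (i j : Fin 4) :
    MX A B C X i j = X 0 * B i j + X 1 * C i j + X 6 * A i j := by
  simp [MX, Matrix.add_apply, Matrix.smul_apply, smul_eq_mul]

lemma aSub_coords {X : Fin 7 → ℝ} (h : X ∈ aSub) :
    X 2 = 0 ∧ X 3 = 0 ∧ X 4 = 0 ∧ X 5 = 0 := by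
  have h' : X ∈ Submodule.span ℝ ({E 0, E 1, E 6} : Set (Fin 7 → ℝ)) := h
  clear h
  induction h' using Submodule.span_induction with
  | mem x hx =>
    rcases hx with rfl | rfl | rfl <;>
      refine ⟨?_, ?_, ?_, ?_⟩ <;> simp [E, Pi.single_apply]
  | zero => simp
  | add x y hx hy ihx ihy =>
    exact ⟨by simp [ihx.1, ihy.1], by simp [ihx.2.1, ihy.2.1],
      by simp [ihx.2.2.1, ihy.2.2.1], by simp [ihx.2.2.2, ihy.2.2.2]⟩
  | smul a x hx ih =>
    exact ⟨by simp [ih.1], by simp [ih.2.1], by simp [ih.2.2.1], by simp [ih.2.2.2]⟩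

lemma nSub_coords {X : Fin 7 → ℝ} (h : X ∈ nSub) :
    X 0 = 0 ∧ X 1 = 0 ∧ X 6 = 0 := by
  have h' : X ∈ Submodule.span ℝ ({E 2, E 3, E 4, E 5} : Set (Fin 7 → ℝ)) := h
  clear h
  induction h' using Submodule.span_induction with
  | mem x hx =>
    rcases hx with rfl | rfl | rfl | rfl <;>
      refine ⟨?_, ?_, ?_⟩ <;> simp [E, Pi.single_apply]
  | zero => simp
  | add x y hx hy ihx ihy =>
    exact ⟨by simp [ihx.1, ihy.1], by simp [ihx.2.1, ihy.2.1], by simp [ihx.2.2, ihy.2.2]⟩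
  | smul a x hx ih =>
    exact ⟨by simp [ih.1], by simp [ih.2.1], by simp [ih.2.2]⟩

lemma keyA (A B C : Matrix (Fin 4) (Fin 4) ℝ)
    (nabla : (Fin 7 → ℝ) → (Fin 7 → ℝ) → (Fin 7 → ℝ)) (hK : IsKoszul A B C nabla)
    (T : (Fin 7 → ℝ) → (Fin 7 → ℝ)) (hT : IsFullTorsion nabla T)
    (X : Fin 7 → ℝ) (h2 : X 2 = 0) (h3 : X 3 = 0) (h4 : X 4 = 0) (h5 : X 5 = 0) :
    T X 2 = 0 ∧ T X 3 = 0 ∧ T X 4 = 0 ∧ T X 5 = 0 := by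
  have hnab : ∀ Y (j : Fin 7), nabla X Y j =
      (1/2 : ℝ) * (bracket A B C X Y j - inner7 (bracket A B C Y (E j)) X
        + inner7 (bracket A B C (E j) X) Y) := by
    intro Y j
    have h := hK X Y (E j)
    rw [inner7_E, inner7_E] at h
    exact h
  have t2 : T X 2 = 0 := by
    have h := hT X (E 0) (E 1) (E 3)
    simp only [phi, psi, w3, w4, Matrix.det_fin_three, det4, Matrix.cons_val', Matrix.cons_val_zero,
      Matrix.cons_val_one, Matrix.head_cons, Matrix.empty_val', Matrix.cons_val_fin_one,
      Matrix.head_fin_const] at h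
    simp [Matrix.vecHead, Matrix.vecTail, hnab, bracket, inner7_emb, Pi.sub_apply, mulVec4,
      MX_apply, emb0, emb1, emb2, emb3, emb4, emb5, emb6, nP0, nP1, nP2, nP3, E,
      Pi.single_apply, h2, h3, h4, h5] at h
    linarith [h]
  have t3 : T X 3 = 0 := by
    have h := hT X (E 0) (E 1) (E 2)
    simp only [phi, psi, w3, w4, Matrix.det_fin_three, det4, Matrix.cons_val', Matrix.cons_val_zero,
      Matrix.cons_val_one, Matrix.head_cons, Matrix.empty_val', Matrix.cons_val_fin_one,
      Matrix.head_fin_const] at h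
    simp [Matrix.vecHead, Matrix.vecTail, hnab, bracket, inner7_emb, Pi.sub_apply, mulVec4,
      MX_apply, emb0, emb1, emb2, emb3, emb4, emb5, emb6, nP0, nP1, nP2, nP3, E,
      Pi.single_apply, h2, h3, h4, h5] at h
    linarith [h]
  have t4 : T X 4 = 0 := by
    have h := hT X (E 0) (E 1) (E 5)
    simp only [phi, psi, w3, w4, Matrix.det_fin_three, det4, Matrix.cons_val', Matrix.cons_val_zero,
      Matrix.cons_val_one, Matrix.head_cons, Matrix.empty_val', Matrix.cons_val_fin_one,
      Matrix.head_fin_const] at h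
    simp [Matrix.vecHead, Matrix.vecTail, hnab, bracket, inner7_emb, Pi.sub_apply, mulVec4,
      MX_apply, emb0, emb1, emb2, emb3, emb4, emb5, emb6, nP0, nP1, nP2, nP3, E,
      Pi.single_apply, h2, h3, h4, h5] at h
    linarith [h]
  have t5 : T X 5 = 0 := by
    have h := hT X (E 0) (E 1) (E 4)
    simp only [phi, psi, w3, w4, Matrix.det_fin_three, det4, Matrix.cons_val', Matrix.cons_val_zero,
      Matrix.cons_val_one, Matrix.head_cons, Matrix.empty_val', Matrix.cons_val_fin_one,
      Matrix.head_fin_const] at h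
    simp [Matrix.vecHead, Matrix.vecTail, hnab, bracket, inner7_emb, Pi.sub_apply, mulVec4,
      MX_apply, emb0, emb1, emb2, emb3, emb4, emb5, emb6, nP0, nP1, nP2, nP3, E,
      Pi.single_apply, h2, h3, h4, h5] at h
    linarith [h]
  exact ⟨t2, t3, t4, t5⟩

lemma keyN (A B C : Matrix (Fin 4) (Fin 4) ℝ)
    (nabla : (Fin 7 → ℝ) → (Fin 7 → ℝ) → (Fin 7 → ℝ)) (hK : IsKoszul A B C nabla)
    (T : (Fin 7 → ℝ) → (Fin 7 → ℝ)) (hT : IsFullTorsion nabla T)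
    (X : Fin 7 → ℝ) (h0 : X 0 = 0) (h1 : X 1 = 0) (h6 : X 6 = 0) :
    T X 0 = 0 ∧ T X 1 = 0 ∧ T X 6 = 0 := by
  have hnab : ∀ Y (j : Fin 7), nabla X Y j =
      (1/2 : ℝ) * (bracket A B C X Y j - inner7 (bracket A B C Y (E j)) X
        + inner7 (bracket A B C (E j) X) Y) := by
    intro Y j
    have h := hK X Y (E j)
    rw [inner7_E, inner7_E] at h
    exact h
  have t0 : T X 0 = 0 := by
    have h := hT X (E 1) (E 2) (E 3)
    simp only [phi, psi, w3, w4, Matrix.det_fin_three, det4, Matrix.cons_val', Matrix.cons_val_zero,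
      Matrix.cons_val_one, Matrix.head_cons, Matrix.empty_val', Matrix.cons_val_fin_one,
      Matrix.head_fin_const] at h
    simp [Matrix.vecHead, Matrix.vecTail, hnab, bracket, inner7_emb, Pi.sub_apply, mulVec4,
      MX_apply, emb0, emb1, emb2, emb3, emb4, emb5, emb6, nP0, nP1, nP2, nP3, E,
      Pi.single_apply, h0, h1, h6] at h
    linarith [h]
  have t1 : T X 1 = 0 := by
    have h := hT X (E 0) (E 2) (E 3)
    simp only [phi, psi, w3, w4, Matrix.det_fin_three, det4, Matrix.cons_val', Matrix.cons_val_zero,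
      Matrix.cons_val_one, Matrix.head_cons, Matrix.empty_val', Matrix.cons_val_fin_one,
      Matrix.head_fin_const] at h
    simp [Matrix.vecHead, Matrix.vecTail, hnab, bracket, inner7_emb, Pi.sub_apply, mulVec4,
      MX_apply, emb0, emb1, emb2, emb3, emb4, emb5, emb6, nP0, nP1, nP2, nP3, E,
      Pi.single_apply, h0, h1, h6] at h
    linarith [h]
  have t6 : T X 6 = 0 := by
    have h := hT X (E 0) (E 2) (E 5)
    simp only [phi, psi, w3, w4, Matrix.det_fin_three, det4, Matrix.cons_val', Matrix.cons_val_zero,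
      Matrix.cons_val_one, Matrix.head_cons, Matrix.empty_val', Matrix.cons_val_fin_one,
      Matrix.head_fin_const] at h
    simp [Matrix.vecHead, Matrix.vecTail, hnab, bracket, inner7_emb, Pi.sub_apply, mulVec4,
      MX_apply, emb0, emb1, emb2, emb3, emb4, emb5, emb6, nP0, nP1, nP2, nP3, E,
      Pi.single_apply, h0, h1, h6] at h
    linarith [h]
  exact ⟨t0, t1, t6⟩

/-- the full torsion tensor of `(𝔤_{A,B,C}, φ)` vanishes on
`𝔞 × 𝔫` and on `𝔫 × 𝔞`. -/
theorem torsion_vanishes_on_a_n (A B C : Matrix (Fin 4) (Fin 4) ℝ)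
    (hAB : A * B = B * A) (hAC : A * C = C * A) (hBC : B * C = C * B)
    (htA : Matrix.trace A = 0) (htB : Matrix.trace B = 0) (htC : Matrix.trace C = 0)
    (nabla : (Fin 7 → ℝ) → (Fin 7 → ℝ) → (Fin 7 → ℝ))
    (hK : IsKoszul A B C nabla)
    (T : (Fin 7 → ℝ) → (Fin 7 → ℝ)) (hT : IsFullTorsion nabla T) :
    (∀ X ∈ aSub, ∀ Y ∈ nSub, Tbil T X Y = 0) ∧
    (∀ X ∈ nSub, ∀ Y ∈ aSub, Tbil T X Y = 0) := by
  constructor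
  · intro X hX Y hY
    obtain ⟨x2, x3, x4, x5⟩ := aSub_coords hX
    obtain ⟨y0, y1, y6⟩ := nSub_coords hY
    obtain ⟨t2, t3, t4, t5⟩ := keyA A B C nabla hK T hT X x2 x3 x4 x5
    simp [Tbil, inner7, Fin.sum_univ_seven, t2, t3, t4, t5, y0, y1, y6]
  · intro X hX Y hY
    obtain ⟨x0, x1, x6⟩ := nSub_coords hX
    obtain ⟨y2, y3, y4, y5⟩ := aSub_coords hY
    obtain ⟨t0, t1, t6⟩ := keyN A B C nabla hK T hT X x0 x1 x6
    simp [Tbil, inner7, Fin.sum_univ_seven, t0, t1, t6, y2, y3, y4, y5]
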